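/- Let U ⊆ ℝ_t × ℝ²_x be open, let h and v¹, v² be C² on U, and suppose they solve the 2D rotating shallow water system B h = −h div v, B v¹ = v² − ∂₁h, B v² = −v¹ − ∂₂h on U. Then for i = 1, 2 the identity B²v^i = ε_{ij} B v^j + (div v) ∂_i h + h ∂_i(div v) + ∂_i v^l ∂_l h holds on U, where j and l are summed over {1,2}. -/

import Mathlib

/-- Partial derivative in the `i`-th coordinate direction of spacetime
`ℝ_t × ℝ²_x ≃ (Fin 3 → ℝ)`, coordinates `(x⁰, x¹, x²) = (t, x₁, x₂)`. -/
noncomputable def pd (i : Fin 3) (f : (Fin 3 → ℝ) → ℝ) (x : Fin 3 → ℝ) : ℝ :=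
  fderiv ℝ f x (Pi.single i 1)

/-- Material derivative `B = ∂ₜ + v¹∂₁ + v²∂₂`. -/
noncomputable def matD (v1 v2 f : (Fin 3 → ℝ) → ℝ) (x : Fin 3 → ℝ) : ℝ :=
  pd 0 f x + v1 x * pd 1 f x + v2 x * pd 2 f x

open Filter Topology

lemma pd_congr {f g : (Fin 3 → ℝ) → ℝ} {x : Fin 3 → ℝ} (hfg : f =ᶠ[𝓝 x] g) (i : Fin 3) :
    pd i f x = pd i g x := by
  unfold pd; rw [hfg.fderiv_eq]

lemma matD_congr {v1 v2 f g : (Fin 3 → ℝ) → ℝ} {x : Fin 3 → ℝ} (hfg : f =ᶠ[𝓝 x] g) :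
    matD v1 v2 f x = matD v1 v2 g x := by
  unfold matD
  rw [pd_congr hfg 0, pd_congr hfg 1, pd_congr hfg 2]

lemma pd_add {f g : (Fin 3 → ℝ) → ℝ} {x : Fin 3 → ℝ} (hf : DifferentiableAt ℝ f x)
    (hg : DifferentiableAt ℝ g x) (i : Fin 3) :
    pd i (fun y => f y + g y) x = pd i f x + pd i g x := by
  simp [pd, fderiv_fun_add hf hg]

lemma pd_neg {f : (Fin 3 → ℝ) → ℝ} {x : Fin 3 → ℝ} (i : Fin 3) :
    pd i (fun y => -f y) x = -pd i f x := by
  simp [pd, fderiv_neg]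

lemma pd_sub {f g : (Fin 3 → ℝ) → ℝ} {x : Fin 3 → ℝ} (hf : DifferentiableAt ℝ f x)
    (hg : DifferentiableAt ℝ g x) (i : Fin 3) :
    pd i (fun y => f y - g y) x = pd i f x - pd i g x := by
  simp [pd, fderiv_fun_sub hf hg]

lemma pd_mul {f g : (Fin 3 → ℝ) → ℝ} {x : Fin 3 → ℝ} (hf : DifferentiableAt ℝ f x)
    (hg : DifferentiableAt ℝ g x) (i : Fin 3) :
    pd i (fun y => f y * g y) x = f x * pd i g x + pd i f x * g x := by
  simp [pd, fderiv_fun_mul hf hg, mul_comm]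

lemma diffAt_pd {f : (Fin 3 → ℝ) → ℝ} {x : Fin 3 → ℝ} (hf : ContDiffAt ℝ 2 f x) (j : Fin 3) :
    DifferentiableAt ℝ (pd j f) x := by
  have h1 : ContDiffAt ℝ 1 (fderiv ℝ f) x := hf.fderiv_right (by norm_num)
  have h2 : DifferentiableAt ℝ (fderiv ℝ f) x := h1.differentiableAt (by norm_num)
  exact h2.clm_apply (differentiableAt_const _)

lemma pd_comm {f : (Fin 3 → ℝ) → ℝ} {x : Fin 3 → ℝ} (hf : ContDiffAt ℝ 2 f x) (i j : Fin 3) :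
    pd i (pd j f) x = pd j (pd i f) x := by
  have hev : ∀ᶠ y in 𝓝 x, HasFDerivAt f (fderiv ℝ f y) y := by
    filter_upwards [hf.eventually (by norm_num)] with y hy
    exact (hy.differentiableAt two_ne_zero).hasFDerivAt
  have h1 : ContDiffAt ℝ 1 (fderiv ℝ f) x := hf.fderiv_right (by norm_num)
  have h2 : DifferentiableAt ℝ (fderiv ℝ f) x := h1.differentiableAt (by norm_num)
  have hd : HasFDerivAt (fderiv ℝ f) (fderiv ℝ (fderiv ℝ f) x) x := h2.hasFDerivAt
  have hsymm := second_derivative_symmetric_of_eventually hev hd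
    (Pi.single i 1) (Pi.single j 1)
  have key : ∀ a b : Fin 3, pd a (pd b f) x
      = fderiv ℝ (fderiv ℝ f) x (Pi.single a 1) (Pi.single b 1) := by
    intro a b
    show fderiv ℝ (fun y => fderiv ℝ f y (Pi.single b 1)) x (Pi.single a 1) = _
    rw [fderiv_clm_apply h2 (differentiableAt_const _)]
    simp
  rw [key, key, hsymm]

lemma pd_matD {v1 v2 f : (Fin 3 → ℝ) → ℝ} {x : Fin 3 → ℝ} (hf : ContDiffAt ℝ 2 f x)
    (h1 : DifferentiableAt ℝ v1 x) (h2 : DifferentiableAt ℝ v2 x) (i : Fin 3) :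
    pd i (matD v1 v2 f) x = matD v1 v2 (pd i f) x
      + pd i v1 x * pd 1 f x + pd i v2 x * pd 2 f x := by
  have d0 := diffAt_pd hf 0
  have d1 := diffAt_pd hf 1
  have d2 := diffAt_pd hf 2
  have e : matD v1 v2 f = fun y => (pd 0 f y + v1 y * pd 1 f y) + v2 y * pd 2 f y := rfl
  rw [e, pd_add (f := fun y => pd 0 f y + v1 y * pd 1 f y) (g := fun y => v2 y * pd 2 f y)
        (d0.add (h1.mul d1)) (h2.mul d2),
      pd_add (g := fun y => v1 y * pd 1 f y) d0 (h1.mul d1), pd_mul h1 d1, pd_mul h2 d2,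
      pd_comm hf i 1, pd_comm hf i 2]
  simp only [matD]
  rw [pd_comm hf 0 i]
  ring


/-- For `C²` solutions of the 2D rotating shallow water system on an open set `U`, the
velocity components satisfy, for `i = 1, 2`,
`B²v^i = ε_{ij} B v^j + (div v) ∂_i h + h ∂_i(div v) + ∂_i v^l ∂_l h` on `U`
(`ε₁₂ = 1 = −ε₂₁`, summation over `j, l ∈ {1,2}`).  The two conjuncts are the cases
`i = 1` and `i = 2`. -/
theorem second_material_derivative_of_velocity
    (U : Set (Fin 3 → ℝ)) (hU : IsOpen U)
    (h v1 v2 : (Fin 3 → ℝ) → ℝ)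
    (hh : ContDiffOn ℝ 2 h U)
    (hv1 : ContDiffOn ℝ 2 v1 U) (hv2 : ContDiffOn ℝ 2 v2 U)
    (hmass : ∀ x ∈ U, matD v1 v2 h x = -(h x) * (pd 1 v1 x + pd 2 v2 x))
    (hmom1 : ∀ x ∈ U, matD v1 v2 v1 x = v2 x - pd 1 h x)
    (hmom2 : ∀ x ∈ U, matD v1 v2 v2 x = -v1 x - pd 2 h x) :
    ∀ x ∈ U,
      (matD v1 v2 (matD v1 v2 v1) x
        = matD v1 v2 v2 x
          + (pd 1 v1 x + pd 2 v2 x) * pd 1 h x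
          + h x * pd 1 (fun y => pd 1 v1 y + pd 2 v2 y) x
          + (pd 1 v1 x * pd 1 h x + pd 1 v2 x * pd 2 h x)) ∧
      (matD v1 v2 (matD v1 v2 v2) x
        = -(matD v1 v2 v1 x)
          + (pd 1 v1 x + pd 2 v2 x) * pd 2 h x
          + h x * pd 2 (fun y => pd 1 v1 y + pd 2 v2 y) x
          + (pd 2 v1 x * pd 1 h x + pd 2 v2 x * pd 2 h x)) := by
  intro x hx
  have hxU : U ∈ 𝓝 x := hU.mem_nhds hx
  have cdh : ContDiffAt ℝ 2 h x := hh.contDiffAt hxU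
  have cdv1 : ContDiffAt ℝ 2 v1 x := hv1.contDiffAt hxU
  have cdv2 : ContDiffAt ℝ 2 v2 x := hv2.contDiffAt hxU
  have dh : DifferentiableAt ℝ h x := cdh.differentiableAt two_ne_zero
  have dv1 : DifferentiableAt ℝ v1 x := cdv1.differentiableAt two_ne_zero
  have dv2 : DifferentiableAt ℝ v2 x := cdv2.differentiableAt two_ne_zero
  have dph1 : DifferentiableAt ℝ (pd 1 h) x := diffAt_pd cdh 1
  have dph2 : DifferentiableAt ℝ (pd 2 h) x := diffAt_pd cdh 2
  have ddiv : DifferentiableAt ℝ (fun y => pd 1 v1 y + pd 2 v2 y) x :=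
    (diffAt_pd cdv1 1).add (diffAt_pd cdv2 2)
  -- pd i of the mass equation
  have evmass : matD v1 v2 h =ᶠ[𝓝 x]
      fun y => (fun y => -h y) y * (fun y => pd 1 v1 y + pd 2 v2 y) y :=
    eventuallyEq_of_mem hxU hmass
  have key : ∀ i : Fin 3, matD v1 v2 (pd i h) x
      = -(h x) * pd i (fun y => pd 1 v1 y + pd 2 v2 y) x
        - pd i h x * (pd 1 v1 x + pd 2 v2 x)
        - pd i v1 x * pd 1 h x - pd i v2 x * pd 2 h x := by
    intro i
    have c := pd_matD cdh dv1 dv2 i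
    have c2 : pd i (matD v1 v2 h) x
        = -(h x) * pd i (fun y => pd 1 v1 y + pd 2 v2 y) x
          - pd i h x * (pd 1 v1 x + pd 2 v2 x) := by
      rw [pd_congr evmass i, pd_mul (f := fun y => -h y) dh.neg ddiv, pd_neg]
      ring
    linarith [c, c2]
  constructor
  · have ev1 : matD v1 v2 v1 =ᶠ[𝓝 x] fun y => v2 y - pd 1 h y :=
      eventuallyEq_of_mem hxU hmom1
    rw [matD_congr ev1]
    have e1 : matD v1 v2 (fun y => v2 y - pd 1 h y) x
        = matD v1 v2 v2 x - matD v1 v2 (pd 1 h) x := by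
      simp only [matD, pd_sub dv2 dph1]
      ring
    rw [e1, key 1]
    ring
  · have ev2 : matD v1 v2 v2 =ᶠ[𝓝 x] fun y => (fun y => -v1 y) y - pd 2 h y :=
      eventuallyEq_of_mem hxU hmom2
    rw [matD_congr ev2]
    have e1 : matD v1 v2 (fun y => (fun y => -v1 y) y - pd 2 h y) x
        = -(matD v1 v2 v1 x) - matD v1 v2 (pd 2 h) x := by
      simp only [matD, pd_sub (f := fun y => -v1 y) dv1.neg dph2, pd_neg]
      ring
    rw [e1, key 2]
    ring
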